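/- Let ℓ ≥ 0 and let a_{−ℓ}, …, a_{ℓ} be 2ℓ+1 centered H-valued random variables, each with covariance operator E[a_m ⊗ a_m] = F_ℓ (a nonnegative self-adjoint nuclear operator), and set F̂_ℓ = (1/(2ℓ+1)) Σ_{m=−ℓ}^{ℓ} a_m ⊗ a_m. Then E‖F̂_ℓ − F_ℓ‖₁ ≤ 2‖F_ℓ‖₁. Consequently, if F̂_ℓ is the sample power spectrum operator of an isotropic H-valued spherical random field (so that Σ_ℓ ‖F_ℓ‖₁ < ∞), then for every ε > 0, Σ_{ℓ=0}^{∞} P(‖F̂_ℓ − F_ℓ‖₁ > ε) ≤ (2/ε) Σ_{ℓ=0}^{∞} ‖F_ℓ‖₁ < ∞, and hence ‖F̂_ℓ − F_ℓ‖₁ → 0 almost surely as ℓ → ∞. -/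

import Mathlib

open MeasureTheory InnerProductSpace Filter
open scoped ENNReal NNReal RealInnerProductSpace BigOperators Topology

noncomputable section

namespace RF

/-- Euclidean three-space. -/
abbrev E3 : Type := EuclideanSpace ℝ (Fin 3)

/-- The unit two-sphere in `ℝ³`. -/
abbrev S2 : Type := Metric.sphere (0 : E3) 1

/-- A linear isometry of `ℝ³` is a rotation (element of `SO(3)`) if it has determinant one. -/
def IsRotation (ρ : E3 ≃ₗᵢ[ℝ] E3) : Prop :=
  LinearMap.det (ρ.toLinearEquiv : E3 →ₗ[ℝ] E3) = 1

/-- The action of a linear isometry of `ℝ³` on the unit sphere. -/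
def rotate (ρ : E3 ≃ₗᵢ[ℝ] E3) (x : S2) : S2 :=
  ⟨ρ x, by
    have hx : ‖(x : E3)‖ = 1 := mem_sphere_zero_iff_norm.mp x.2
    rw [mem_sphere_zero_iff_norm, ρ.norm_map]
    exact hx⟩

variable {H : Type*} [NormedAddCommGroup H] [InnerProductSpace ℝ H]

/-- The rank-one operator `u ⊗ v : f ↦ ⟪f, v⟫ • u`. -/
def rankOne (u v : H) : H →L[ℝ] H := (innerSL ℝ v).smulRight u

/-- The trace (nuclear) norm of an operator, as an extended nonnegative real:
`‖A‖₁ = sup { ∑ⱼ |⟪A eⱼ, fⱼ⟫| }`, the supremum being over all pairs of finite orthonormal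
families.  It is finite precisely on trace-class operators, where it coincides with the
usual nuclear norm. -/
def traceNorm (A : H →L[ℝ] H) : ℝ≥0∞ :=
  ⨆ (n : ℕ) (e : Fin n → H) (f : Fin n → H) (_ : Orthonormal ℝ e) (_ : Orthonormal ℝ f),
    ∑ j, (‖⟪A (e j), f j⟫_ℝ‖₊ : ℝ≥0∞)

/-- The trace (nuclear) norm, as a real number (junk value `0` for non-nuclear operators). -/
def traceNormR (A : H →L[ℝ] H) : ℝ := (traceNorm A).toReal

/-- An operator is nuclear (trace class) if its trace norm is finite. -/
def IsNuclear (A : H →L[ℝ] H) : Prop := traceNorm A < ⊤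

/-- A fixed choice of index set for a Hilbert basis of `H`. -/
def bIdx (H : Type*) [NormedAddCommGroup H] [InnerProductSpace ℝ H] [CompleteSpace H] :
    Set H :=
  (exists_hilbertBasis ℝ H).choose

/-- A fixed choice of Hilbert basis (complete orthonormal system) of `H`. -/
def bStd (H : Type*) [NormedAddCommGroup H] [InnerProductSpace ℝ H] [CompleteSpace H] :
    HilbertBasis (bIdx H) ℝ H :=
  (exists_hilbertBasis ℝ H).choose_spec.choose

variable [CompleteSpace H]

/-- The trace of an operator, `Tr A = ∑ᵢ ⟪A eᵢ, eᵢ⟫` over a complete orthonormal system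
(basis-independent for nuclear operators). -/
def opTrace (A : H →L[ℝ] H) : ℝ := ∑' i : bIdx H, ⟪A (bStd H i), bStd H i⟫_ℝ

/-- The squared Hilbert–Schmidt norm `‖A‖₂² = ∑ᵢ ‖A eᵢ‖²` (junk value `0` if not summable). -/
def hsNormSq (A : H →L[ℝ] H) : ℝ := ∑' i : bIdx H, ‖A (bStd H i)‖ ^ 2

/-- The fourth power of the `4`-Schatten norm: `‖A‖₄⁴ = ‖A⋆A‖₂²`. -/
def schatten4Pow4 (A : H →L[ℝ] H) : ℝ :=
  hsNormSq ((ContinuousLinearMap.adjoint A).comp A)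

/-- An `H`-valued random variable is centered Gaussian if all its real pairings are centered
Gaussian random variables. -/
def IsCenteredGaussian {Ω : Type*} [MeasurableSpace Ω] (P : Measure Ω) (a : Ω → H) : Prop :=
  ∀ w : H, ∃ v : ℝ≥0,
    Measure.map (fun ω => ⟪a ω, w⟫_ℝ) P = ProbabilityTheory.gaussianReal 0 v

/-- The autocovariance operator `𝓡_{x,y} = E[T(x) ⊗ T(y)]` of a spherical random field. -/
def cov {Ω : Type*} [MeasurableSpace Ω] (P : Measure Ω) (T : S2 → Ω → H) (x y : S2) :
    H →L[ℝ] H :=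
  ∫ ω, rankOne (T x ω) (T y ω) ∂P

/-- An isotropic `H`-valued spherical random field: a jointly measurable collection of
centered, square-integrable `H`-valued random variables indexed by the sphere, whose
autocovariance operators are invariant under rotations. -/
structure IsIsotropicField {Ω : Type*} [MeasurableSpace Ω] (P : Measure Ω)
    (T : S2 → Ω → H) : Prop where
  jointMeas : StronglyMeasurable (Function.uncurry T)
  centered : ∀ x, ∫ ω, T x ω ∂P = 0
  sqInt : ∀ x, MemLp (T x) 2 P
  isotropic : ∀ ρ : E3 ≃ₗᵢ[ℝ] E3, IsRotation ρ → ∀ x y : S2,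
    cov P T (rotate ρ x) (rotate ρ y) = cov P T x y

/-- A measure on the sphere is the surface (Lebesgue) measure if it is rotation invariant
with total mass `4π`. -/
structure IsSphereMeasure (μ : Measure S2) : Prop where
  mass : μ Set.univ = ENNReal.ofReal (4 * Real.pi)
  invariant : ∀ ρ : E3 ≃ₗᵢ[ℝ] E3, IsRotation ρ → Measure.map (rotate ρ) μ = μ

/-- The `ℓ`-th Legendre polynomial (Rodrigues' formula). -/
def legendreP (ℓ : ℕ) : Polynomial ℝ :=
  ((2 ^ ℓ * ℓ.factorial : ℝ)⁻¹) •
    ((⇑(Polynomial.derivative (R := ℝ)))^[ℓ] ((Polynomial.X ^ 2 - 1) ^ ℓ))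

/-- The value of the `ℓ`-th Legendre polynomial. -/
def legval (ℓ : ℕ) (t : ℝ) : ℝ := (legendreP ℓ).eval t

/-- The north pole `e₃ = (0,0,1)` of the sphere. -/
def northPole : E3 := EuclideanSpace.single 2 1

/-- The central spherical harmonic `Y_{ℓ,0}(x) = √((2ℓ+1)/(4π)) P_ℓ(⟪x, e₃⟫)`. -/
def Y0 (ℓ : ℕ) (x : S2) : ℝ :=
  Real.sqrt ((2 * ℓ + 1) / (4 * Real.pi)) * legval ℓ ⟪(x : E3), northPole⟫_ℝ

/-- The power spectrum operator
`𝓕_ℓ = ∫_{S²×S²} 𝓡_{⟨x,y⟩} Y_{ℓ,0}(x) Y_{ℓ,0}(y) dx dy`. -/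
def psOp {Ω : Type*} [MeasurableSpace Ω] (P : Measure Ω) (T : S2 → Ω → H)
    (μ : Measure S2) (ℓ : ℕ) : H →L[ℝ] H :=
  ∫ p : S2 × S2, (Y0 ℓ p.1 * Y0 ℓ p.2) • cov P T p.1 p.2 ∂(μ.prod μ)

end RF
namespace RF

variable {H : Type*} [NormedAddCommGroup H] [InnerProductSpace ℝ H]

/-- A family of real fully normalized spherical harmonics for the measure `μ`:
jointly with `Y_{ℓ,0}` given by Legendre polynomials, they form an orthonormal basis of
`L²(S²; ℝ)` satisfying the addition formula. -/
structure IsSphericalHarmonics (μ : Measure S2) (Y : ℕ → ℤ → S2 → ℝ) : Prop where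
  meas : ∀ ℓ m, Measurable (Y ℓ m)
  zero_eq : ∀ ℓ, Y ℓ 0 = Y0 ℓ
  orthonormal : ∀ (ℓ : ℕ) (m : ℤ) (ℓ' : ℕ) (m' : ℤ),
    m ∈ Finset.Icc (-(ℓ : ℤ)) ℓ → m' ∈ Finset.Icc (-(ℓ' : ℤ)) ℓ' →
    ∫ x, Y ℓ m x * Y ℓ' m' x ∂μ = if ℓ = ℓ' ∧ m = m' then 1 else 0
  addition : ∀ (ℓ : ℕ) (x y : S2),
    ∑ m ∈ Finset.Icc (-(ℓ : ℤ)) ℓ, Y ℓ m x * Y ℓ m y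
      = (2 * ℓ + 1) / (4 * Real.pi) * legval ℓ ⟪(x : E3), (y : E3)⟫_ℝ
  complete : ∀ f : S2 → ℝ, MemLp f 2 μ →
    (∀ (ℓ : ℕ) (m : ℤ), m ∈ Finset.Icc (-(ℓ : ℤ)) ℓ → ∫ x, f x * Y ℓ m x ∂μ = 0) →
    f =ᵐ[μ] 0

variable [CompleteSpace H]

/-- The random harmonic coefficient `a_{ℓ,m} = ∫_{S²} T(x) Y_{ℓ,m}(x) dx`. -/
def harmCoef {Ω : Type*} (T : S2 → Ω → H) (μ : Measure S2)
    (Y : ℕ → ℤ → S2 → ℝ) (ℓ : ℕ) (m : ℤ) (ω : Ω) : H :=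
  ∫ x, Y ℓ m x • T x ω ∂μ

/-- The partial sum `T_L(x) = ∑_{ℓ=0}^L ∑_{m=-ℓ}^{ℓ} a_{ℓ,m} Y_{ℓ,m}(x)`. -/
def partialField {Ω : Type*} (T : S2 → Ω → H) (μ : Measure S2)
    (Y : ℕ → ℤ → S2 → ℝ) (L : ℕ) (x : S2) (ω : Ω) : H :=
  ∑ ℓ ∈ Finset.range (L + 1), ∑ m ∈ Finset.Icc (-(ℓ : ℤ)) ℓ,
    Y ℓ m x • harmCoef T μ Y ℓ m ω

/-- The sample power spectrum operator `𝓕̂_ℓ = (2ℓ+1)⁻¹ ∑ₘ a_{ℓ,m} ⊗ a_{ℓ,m}`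
(for `n = 2ℓ+1` coefficients). -/
def sampPS {Ω : Type*} {n : ℕ} (a : Fin n → Ω → H) (ω : Ω) : H →L[ℝ] H :=
  ((n : ℝ))⁻¹ • ∑ m, rankOne (a m ω) (a m ω)

/-- The sample reduced power spectrum `𝓒̂_ℓ = (2ℓ+1)⁻¹ ∑ₘ ‖a_{ℓ,m}‖²`. -/
def sampRed {Ω : Type*} {n : ℕ} (a : Fin n → Ω → H) (ω : Ω) : ℝ :=
  ((n : ℝ))⁻¹ * ∑ m, ‖a m ω‖ ^ 2

end RF

namespace RF

section Aux

variable {H : Type*} [NormedAddCommGroup H] [InnerProductSpace ℝ H]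

lemma rankOne_apply' (u v x : H) : rankOne u v x = ⟪x, v⟫_ℝ • u := by
  simp [rankOne, real_inner_comm]

lemma inner_rankOne (u v x y : H) :
    ⟪rankOne u v x, y⟫_ℝ = ⟪x, v⟫_ℝ * ⟪u, y⟫_ℝ := by
  simp [rankOne_apply', real_inner_smul_left]

lemma le_traceNorm {n : ℕ} (A : H →L[ℝ] H) (e f : Fin n → H)
    (he : Orthonormal ℝ e) (hf : Orthonormal ℝ f) :
    ∑ j, (‖⟪A (e j), f j⟫_ℝ‖₊ : ℝ≥0∞) ≤ traceNorm A :=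
  le_iSup_of_le n (le_iSup_of_le e (le_iSup_of_le f
    (le_iSup_of_le he (le_iSup_of_le hf le_rfl))))

lemma traceNorm_le_of_forall {A : H →L[ℝ] H} {C : ℝ≥0∞}
    (h : ∀ (n : ℕ) (e f : Fin n → H), Orthonormal ℝ e → Orthonormal ℝ f →
      ∑ j, (‖⟪A (e j), f j⟫_ℝ‖₊ : ℝ≥0∞) ≤ C) :
    traceNorm A ≤ C :=
  iSup_le fun n => iSup_le fun e => iSup_le fun f => iSup_le fun he =>
    iSup_le fun hf => h n e f he hf

lemma traceNorm_zero : traceNorm (0 : H →L[ℝ] H) = 0 := by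
  refine le_antisymm (traceNorm_le_of_forall fun n e f _ _ => ?_) (zero_le)
  simp

lemma traceNorm_neg (A : H →L[ℝ] H) : traceNorm (-A) = traceNorm A := by
  unfold traceNorm
  simp only [ContinuousLinearMap.neg_apply, inner_neg_left, nnnorm_neg]

lemma traceNorm_add_le (A B : H →L[ℝ] H) :
    traceNorm (A + B) ≤ traceNorm A + traceNorm B := by
  refine traceNorm_le_of_forall fun n e f he hf => ?_
  calc ∑ j, (‖⟪(A + B) (e j), f j⟫_ℝ‖₊ : ℝ≥0∞)
      ≤ ∑ j, ((‖⟪A (e j), f j⟫_ℝ‖₊ : ℝ≥0∞) + (‖⟪B (e j), f j⟫_ℝ‖₊ : ℝ≥0∞)) := by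
        refine Finset.sum_le_sum fun j _ => ?_
        simp only [ContinuousLinearMap.add_apply, inner_add_left]
        exact_mod_cast nnnorm_add_le _ _
    _ = (∑ j, (‖⟪A (e j), f j⟫_ℝ‖₊ : ℝ≥0∞)) + ∑ j, (‖⟪B (e j), f j⟫_ℝ‖₊ : ℝ≥0∞) :=
        Finset.sum_add_distrib
    _ ≤ _ := add_le_add (le_traceNorm A e f he hf) (le_traceNorm B e f he hf)

lemma traceNorm_sub_le (A B : H →L[ℝ] H) :
    traceNorm (A - B) ≤ traceNorm A + traceNorm B := by
  rw [sub_eq_add_neg]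
  simpa [traceNorm_neg] using traceNorm_add_le A (-B)

lemma traceNorm_smul_le (c : ℝ) (A : H →L[ℝ] H) :
    traceNorm (c • A) ≤ (‖c‖₊ : ℝ≥0∞) * traceNorm A := by
  refine traceNorm_le_of_forall fun n e f he hf => ?_
  have : ∀ j, (‖⟪(c • A) (e j), f j⟫_ℝ‖₊ : ℝ≥0∞)
      = (‖c‖₊ : ℝ≥0∞) * (‖⟪A (e j), f j⟫_ℝ‖₊ : ℝ≥0∞) := by
    intro j
    simp only [ContinuousLinearMap.smul_apply, inner_smul_left, RCLike.star_def, starRingEnd_apply,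
      star_trivial]
    exact_mod_cast nnnorm_mul c _
  rw [Finset.sum_congr rfl fun j _ => this j, ← Finset.mul_sum]
  exact mul_le_mul_right (le_traceNorm A e f he hf) _

lemma traceNorm_sum_le {ι : Type*} (s : Finset ι) (A : ι → H →L[ℝ] H) :
    traceNorm (∑ i ∈ s, A i) ≤ ∑ i ∈ s, traceNorm (A i) := by
  classical
  induction s using Finset.induction_on with
  | empty => simp [traceNorm_zero]
  | insert i s hx ih =>
    rw [Finset.sum_insert hx, Finset.sum_insert hx]
    exact (traceNorm_add_le _ _).trans (add_le_add_right ih _)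

lemma traceNorm_rankOne_le (u : H) :
    traceNorm (rankOne u u) ≤ (‖u‖₊ : ℝ≥0∞) ^ 2 := by
  refine traceNorm_le_of_forall fun n e f he hf => ?_
  have key : ∑ j, ‖⟪rankOne u u (e j), f j⟫_ℝ‖ ≤ ‖u‖ ^ 2 := by
    have h1 : ∀ j : Fin n, ‖⟪rankOne u u (e j), f j⟫_ℝ‖
        = ‖⟪e j, u⟫_ℝ‖ * ‖⟪u, f j⟫_ℝ‖ := by
      intro j; rw [inner_rankOne, norm_mul]
    calc ∑ j, ‖⟪rankOne u u (e j), f j⟫_ℝ‖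
        = ∑ j, ‖⟪e j, u⟫_ℝ‖ * ‖⟪u, f j⟫_ℝ‖ := by rw [Finset.sum_congr rfl fun j _ => h1 j]
      _ ≤ ‖u‖ * ‖u‖ := by
          have hcs := Finset.sum_mul_sq_le_sq_mul_sq Finset.univ
            (fun j : Fin n => ‖⟪e j, u⟫_ℝ‖) (fun j : Fin n => ‖⟪u, f j⟫_ℝ‖)
          have he' : ∑ j : Fin n, ‖⟪e j, u⟫_ℝ‖ ^ 2 ≤ ‖u‖ ^ 2 := by
            simpa using he.sum_inner_products_le (s := Finset.univ) u
          have hf' : ∑ j : Fin n, ‖⟪u, f j⟫_ℝ‖ ^ 2 ≤ ‖u‖ ^ 2 := by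
            have := hf.sum_inner_products_le (s := Finset.univ) u
            simpa [real_inner_comm] using this
          have hnn : (0:ℝ) ≤ ∑ j : Fin n, ‖⟪e j, u⟫_ℝ‖ * ‖⟪u, f j⟫_ℝ‖ :=
            Finset.sum_nonneg fun j _ => mul_nonneg (norm_nonneg _) (norm_nonneg _)
          nlinarith [sq_nonneg (‖u‖ : ℝ), norm_nonneg u,
            Finset.sum_nonneg (fun j (_ : j ∈ Finset.univ) =>
              sq_nonneg ‖⟪e j, u⟫_ℝ‖), Finset.sum_nonneg (fun j (_ : j ∈ Finset.univ) =>
              sq_nonneg ‖⟪u, f j⟫_ℝ‖)]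
      _ = ‖u‖ ^ 2 := (sq ‖u‖).symm
  calc ∑ j, (‖⟪rankOne u u (e j), f j⟫_ℝ‖₊ : ℝ≥0∞)
      = ENNReal.ofReal (∑ j, ‖⟪rankOne u u (e j), f j⟫_ℝ‖) := by
        rw [ENNReal.ofReal_sum_of_nonneg fun j _ => norm_nonneg _]
        exact Finset.sum_congr rfl fun j _ => (ofReal_norm _).symm
    _ ≤ ENNReal.ofReal (‖u‖ ^ 2) := ENNReal.ofReal_le_ofReal key
    _ = (‖u‖₊ : ℝ≥0∞) ^ 2 := by
        rw [ENNReal.ofReal_pow (norm_nonneg _), ofReal_norm, enorm_eq_nnnorm]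

lemma sum_ofReal_inner_le_traceNorm {n : ℕ} (A : H →L[ℝ] H) (e : Fin n → H)
    (he : Orthonormal ℝ e) :
    ∑ j, ENNReal.ofReal ⟪A (e j), e j⟫_ℝ ≤ traceNorm A := by
  refine le_trans (Finset.sum_le_sum fun j _ => ?_) (le_traceNorm A e e he he)
  rw [← enorm_eq_nnnorm, ← ofReal_norm]
  exact ENNReal.ofReal_le_ofReal (le_abs_self _)

lemma norm_rankOne_le (u v : H) : ‖rankOne u v‖ ≤ ‖u‖ * ‖v‖ := by
  rw [rankOne, ContinuousLinearMap.norm_smulRight_apply, innerSL_apply_norm]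
  exact le_of_eq (mul_comm _ _)

lemma continuous_rankOne : Continuous fun p : H × H => rankOne p.1 p.2 := by
  have h : (fun p : H × H => rankOne p.1 p.2)
      = fun p : H × H => (ContinuousLinearMap.smulRightL ℝ H H (innerSL ℝ p.2)) p.1 := rfl
  rw [h]
  exact isBoundedBilinearMap_apply.continuous.comp
    (((ContinuousLinearMap.smulRightL ℝ H H).continuous.comp
      ((innerSL ℝ).continuous.comp continuous_snd)).prodMk continuous_fst)

variable {Ω : Type*} [MeasurableSpace Ω] {P : Measure Ω}

lemma aesm_rankOne {a : Ω → H} (hm : AEStronglyMeasurable a P) :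
    AEStronglyMeasurable (fun ω => rankOne (a ω) (a ω)) P :=
  continuous_rankOne.comp_aestronglyMeasurable (hm.prodMk hm)

lemma integrable_rankOne {a : Ω → H} (hm : AEStronglyMeasurable a P) (h2 : MemLp a 2 P) :
    Integrable (fun ω => rankOne (a ω) (a ω)) P := by
  have hsq : Integrable (fun ω => ‖a ω‖ ^ 2) P := h2.norm.integrable_sq
  refine hsq.mono' (aesm_rankOne hm) (Filter.Eventually.of_forall fun ω => ?_)
  have h1 : ‖rankOne (a ω) (a ω)‖ ≤ ‖a ω‖ * ‖a ω‖ := norm_rankOne_le _ _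
  calc ‖rankOne (a ω) (a ω)‖ ≤ ‖a ω‖ * ‖a ω‖ := h1
    _ = ‖a ω‖ ^ 2 := (sq ‖a ω‖).symm

lemma aemeasurable_traceNorm {G : Ω → H →L[ℝ] H} (hG : AEStronglyMeasurable G P) :
    AEMeasurable (fun ω => traceNorm (G ω)) P := by
  have hlsc : LowerSemicontinuous (traceNorm : (H →L[ℝ] H) → ℝ≥0∞) := by
    have hc : ∀ (n : ℕ) (e f : Fin n → H),
        Continuous fun A : H →L[ℝ] H => ∑ j, (‖⟪A (e j), f j⟫_ℝ‖₊ : ℝ≥0∞) := by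
      intro n e f
      refine continuous_finset_sum _ fun j _ => ?_
      have h1 : Continuous fun A : H →L[ℝ] H => ⟪A (e j), f j⟫_ℝ :=
        Continuous.inner (ContinuousLinearMap.apply ℝ H (e j)).continuous continuous_const
      exact ENNReal.continuous_coe.comp (continuous_nnnorm.comp h1)
    unfold traceNorm
    refine lowerSemicontinuous_iSup fun n => lowerSemicontinuous_iSup fun e =>
      lowerSemicontinuous_iSup fun f => lowerSemicontinuous_iSup fun _ =>
      lowerSemicontinuous_iSup fun _ => (hc n e f).lowerSemicontinuous
  borelize (H →L[ℝ] H)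
  exact hlsc.measurable.comp_aemeasurable hG.aemeasurable

variable [CompleteSpace H]

lemma countable_bIdx [TopologicalSpace.SeparableSpace H] : Countable (bIdx H) := by
  have hb : Orthonormal ℝ (fun i : bIdx H => (bStd H i : H)) := (bStd H).orthonormal
  refine Pairwise.countable_of_isOpen_disjoint
    (s := fun i : bIdx H => Metric.ball (bStd H i) (1/2))
    ?_ (fun i => Metric.isOpen_ball) (fun i => Metric.nonempty_ball.2 (by norm_num))
  intro i j hij
  refine Metric.ball_disjoint_ball ?_
  have h2 : dist (bStd H i) (bStd H j) ^ 2 = 2 := by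
    rw [dist_eq_norm, norm_sub_sq_real, hb.2 hij]
    have h1 : ‖bStd H i‖ = 1 := hb.1 i
    have h1' : ‖bStd H j‖ = 1 := hb.1 j
    rw [h1, h1']; ring
  have hd : (0:ℝ) ≤ dist (bStd H i) (bStd H j) := dist_nonneg
  nlinarith

lemma integral_inner_sq {a : Ω → H} {F : H →L[ℝ] H}
    (hm : AEStronglyMeasurable a P) (h2 : MemLp a 2 P)
    (hc : ∫ ω, rankOne (a ω) (a ω) ∂P = F) (w : H) :
    ∫ ω, ⟪a ω, w⟫_ℝ ^ 2 ∂P = ⟪F w, w⟫_ℝ := by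
  have hG : Integrable (fun ω => rankOne (a ω) (a ω)) P := integrable_rankOne hm h2
  set Φ : (H →L[ℝ] H) →L[ℝ] ℝ :=
    (innerSL ℝ w).comp (ContinuousLinearMap.apply ℝ H w) with hΦdef
  have hΦ : ∫ ω, Φ (rankOne (a ω) (a ω)) ∂P = Φ F := by
    rw [← hc]; exact Φ.integral_comp_comm hG
  have h5 : ∀ ω, Φ (rankOne (a ω) (a ω)) = ⟪a ω, w⟫_ℝ ^ 2 := by
    intro ω
    simp only [hΦdef, ContinuousLinearMap.coe_comp', Function.comp_apply,
      ContinuousLinearMap.apply_apply, innerSL_apply_apply]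
    rw [real_inner_comm, inner_rankOne, sq]
    congr 1
    exact real_inner_comm _ _
  have h6 : Φ F = ⟪F w, w⟫_ℝ := by
    simp only [hΦdef, ContinuousLinearMap.coe_comp', Function.comp_apply,
      ContinuousLinearMap.apply_apply, innerSL_apply_apply]
    exact real_inner_comm _ _
  rw [← h6, ← hΦ]
  exact integral_congr_ae (Filter.Eventually.of_forall fun ω => (h5 ω).symm)

lemma lintegral_norm_sq_le [TopologicalSpace.SeparableSpace H]
    {a : Ω → H} {F : H →L[ℝ] H}
    (hm : AEStronglyMeasurable a P) (h2 : MemLp a 2 P)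
    (hc : ∫ ω, rankOne (a ω) (a ω) ∂P = F) :
    ∫⁻ ω, (‖a ω‖₊ : ℝ≥0∞) ^ 2 ∂P ≤ traceNorm F := by
  haveI : Countable (bIdx H) := countable_bIdx
  set b := bStd H with hbdef
  have hpt : ∀ u : H, (‖u‖₊ : ℝ≥0∞) ^ 2 = ∑' i, ENNReal.ofReal (⟪u, (b i : H)⟫_ℝ ^ 2) := by
    intro u
    have hsum : Summable fun i : bIdx H => ⟪u, (b i : H)⟫_ℝ * ⟪(b i : H), u⟫_ℝ :=
      b.summable_inner_mul_inner u u
    have hsq : ∀ i : bIdx H, ⟪u, (b i : H)⟫_ℝ * ⟪(b i : H), u⟫_ℝ = ⟪u, (b i : H)⟫_ℝ ^ 2 :=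
      fun i => by rw [real_inner_comm (b i : H) u, sq]
    have ht : ∑' i, ⟪u, (b i : H)⟫_ℝ ^ 2 = ⟪u, u⟫_ℝ := by
      rw [← tsum_congr hsq]; exact b.tsum_inner_mul_inner u u
    calc (‖u‖₊ : ℝ≥0∞) ^ 2 = ENNReal.ofReal (‖u‖ ^ 2) := by
          rw [ENNReal.ofReal_pow (norm_nonneg _), ofReal_norm, enorm_eq_nnnorm]
      _ = ENNReal.ofReal (∑' i, ⟪u, (b i : H)⟫_ℝ ^ 2) := by
          rw [ht, real_inner_self_eq_norm_sq]
      _ = ∑' i, ENNReal.ofReal (⟪u, (b i : H)⟫_ℝ ^ 2) :=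
          ENNReal.ofReal_tsum_of_nonneg (fun i => sq_nonneg _) (hsum.congr hsq)
  have hinner : ∀ i : bIdx H,
      AEMeasurable (fun ω => ENNReal.ofReal (⟪a ω, (b i : H)⟫_ℝ ^ 2)) P := by
    intro i
    have h1 : AEStronglyMeasurable (fun ω => ⟪a ω, (b i : H)⟫_ℝ) P :=
      hm.inner aestronglyMeasurable_const
    exact ENNReal.measurable_ofReal.comp_aemeasurable (h1.aemeasurable.pow_const 2)
  calc ∫⁻ ω, (‖a ω‖₊ : ℝ≥0∞) ^ 2 ∂P
      = ∫⁻ ω, ∑' i, ENNReal.ofReal (⟪a ω, (b i : H)⟫_ℝ ^ 2) ∂P := by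
        exact lintegral_congr fun ω => hpt (a ω)
    _ = ∑' i, ∫⁻ ω, ENNReal.ofReal (⟪a ω, (b i : H)⟫_ℝ ^ 2) ∂P := lintegral_tsum hinner
    _ = ∑' i, ENNReal.ofReal ⟪F (b i : H), (b i : H)⟫_ℝ := by
        refine tsum_congr fun i => ?_
        have hmem : MemLp (fun ω => ⟪a ω, (b i : H)⟫_ℝ) 2 P := by
          have h3 := h2.const_inner (𝕜 := ℝ) (b i : H)
          refine h3.congr_norm ?_ ?_
          · exact hm.inner aestronglyMeasurable_const
          · exact Filter.Eventually.of_forall fun ω => by rw [real_inner_comm]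
        have hint : Integrable (fun ω => ⟪a ω, (b i : H)⟫_ℝ ^ 2) P := hmem.integrable_sq
        rw [← ofReal_integral_eq_lintegral_ofReal hint
          (Filter.Eventually.of_forall fun ω => sq_nonneg _)]
        congr 1
        exact integral_inner_sq hm h2 hc ((b i : H))
    _ ≤ traceNorm F := by
        rw [ENNReal.tsum_eq_iSup_sum]
        refine iSup_le fun s => ?_
        classical
        have hb : Orthonormal ℝ (fun i : bIdx H => (b i : H)) := b.orthonormal
        set e : Fin s.card → H := fun j => (b ((s.equivFin.symm j : {x // x ∈ s}) : bIdx H) : H)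
          with he_def
        have hinj : Function.Injective
            (fun j : Fin s.card => ((s.equivFin.symm j : {x // x ∈ s}) : bIdx H)) :=
          Subtype.coe_injective.comp s.equivFin.symm.injective
        have he : Orthonormal ℝ e := hb.comp _ hinj
        have hsum_eq : ∑ i ∈ s, ENNReal.ofReal ⟪F (b i : H), (b i : H)⟫_ℝ
            = ∑ j, ENNReal.ofReal ⟪F (e j), e j⟫_ℝ := by
          rw [← Finset.sum_coe_sort s]
          exact (Equiv.sum_comp s.equivFin.symm
            (fun i : {x // x ∈ s} => ENNReal.ofReal ⟪F (b (i : bIdx H) : H), (b (i : bIdx H) : H)⟫_ℝ)).symm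
        rw [hsum_eq]
        exact sum_ofReal_inner_le_traceNorm F e he

end Aux

/-- Consistency of the sample power spectrum operators.
If `a_{-ℓ}, …, a_ℓ` are `2ℓ+1` centered `H`-valued random variables with common covariance
operator `𝓕_ℓ` (nonnegative, self-adjoint, nuclear), then the sample power spectrum operator
`𝓕̂_ℓ` satisfies `E‖𝓕̂_ℓ − 𝓕_ℓ‖₁ ≤ 2‖𝓕_ℓ‖₁`.  Consequently, if `∑_ℓ ‖𝓕_ℓ‖₁ < ∞` (as holds for
the power spectrum of an isotropic field), then for every `ε > 0`,
`∑_ℓ P(‖𝓕̂_ℓ − 𝓕_ℓ‖₁ > ε) ≤ (2/ε) ∑_ℓ ‖𝓕_ℓ‖₁ < ∞`, and `‖𝓕̂_ℓ − 𝓕_ℓ‖₁ → 0` almost surely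
as `ℓ → ∞`. -/
theorem samplePS_consistency
    {H : Type*} [NormedAddCommGroup H] [InnerProductSpace ℝ H] [CompleteSpace H]
    [TopologicalSpace.SeparableSpace H]
    {Ω : Type*} [MeasurableSpace Ω] (P : Measure Ω) [IsProbabilityMeasure P]
    (a : (ℓ : ℕ) → Fin (2 * ℓ + 1) → Ω → H) (F : ℕ → H →L[ℝ] H)
    (hmeas : ∀ ℓ m, AEStronglyMeasurable (a ℓ m) P)
    (hL2 : ∀ ℓ m, MemLp (a ℓ m) 2 P)
    (hcent : ∀ ℓ m, ∫ ω, a ℓ m ω ∂P = 0)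
    (hcov : ∀ ℓ m, ∫ ω, rankOne (a ℓ m ω) (a ℓ m ω) ∂P = F ℓ)
    (hsa : ∀ ℓ, ContinuousLinearMap.adjoint (F ℓ) = F ℓ)
    (hnn : ∀ ℓ (f : H), 0 ≤ ⟪F ℓ f, f⟫_ℝ)
    (hnuc : ∀ ℓ, IsNuclear (F ℓ))
    (hsum : ∑' ℓ, traceNorm (F ℓ) ≠ ⊤) :
    (∀ ℓ, ∫⁻ ω, traceNorm (sampPS (a ℓ) ω - F ℓ) ∂P ≤ 2 * traceNorm (F ℓ)) ∧
      (∀ ε : ℝ, 0 < ε →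
        ∑' ℓ, P {ω | ENNReal.ofReal ε < traceNorm (sampPS (a ℓ) ω - F ℓ)}
            ≤ ENNReal.ofReal (2 / ε) * ∑' ℓ, traceNorm (F ℓ) ∧
          ∑' ℓ, P {ω | ENNReal.ofReal ε < traceNorm (sampPS (a ℓ) ω - F ℓ)} < ⊤) ∧
      ∀ᵐ ω ∂P, Tendsto (fun ℓ => traceNorm (sampPS (a ℓ) ω - F ℓ)) atTop (𝓝 0) := by
  have hG : ∀ ℓ, AEStronglyMeasurable (fun ω => sampPS (a ℓ) ω - F ℓ) P := by
    intro ℓ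
    have h1 : AEStronglyMeasurable (fun ω => ∑ m, rankOne (a ℓ m ω) (a ℓ m ω)) P :=
      Finset.aestronglyMeasurable_fun_sum _ fun m _ => aesm_rankOne (hmeas ℓ m)
    have h2 : AEStronglyMeasurable
        (fun ω => ((2 * ℓ + 1 : ℕ) : ℝ)⁻¹ • ∑ m, rankOne (a ℓ m ω) (a ℓ m ω)) P :=
      h1.const_smul (((2 * ℓ + 1 : ℕ) : ℝ)⁻¹)
    exact h2.sub aestronglyMeasurable_const
  have hgmeas : ∀ ℓ, AEMeasurable (fun ω => traceNorm (sampPS (a ℓ) ω - F ℓ)) P :=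
    fun ℓ => aemeasurable_traceNorm (hG ℓ)
  have h1 : ∀ ℓ, ∫⁻ ω, traceNorm (sampPS (a ℓ) ω - F ℓ) ∂P ≤ 2 * traceNorm (F ℓ) := by
    intro ℓ
    set n : ℕ := 2 * ℓ + 1 with hn
    have hn0 : ((n : ℝ≥0∞)) ≠ 0 := Nat.cast_ne_zero.mpr (by omega)
    have hnt : ((n : ℝ≥0∞)) ≠ ⊤ := ENNReal.natCast_ne_top n
    have h4 : (‖((n : ℝ))⁻¹‖₊ : ℝ≥0∞) = ((n : ℝ≥0∞))⁻¹ := by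
      rw [nnnorm_inv, ENNReal.coe_inv (nnnorm_ne_zero_iff.mpr (by positivity))]
      congr 1
      simp
    have hS : ∀ ω, traceNorm (sampPS (a ℓ) ω)
        ≤ ((n : ℝ≥0∞))⁻¹ * ∑ m, (‖a ℓ m ω‖₊ : ℝ≥0∞) ^ 2 := by
      intro ω
      have h2 := traceNorm_smul_le ((n : ℝ))⁻¹ (∑ m, rankOne (a ℓ m ω) (a ℓ m ω))
      have h3 : traceNorm (∑ m, rankOne (a ℓ m ω) (a ℓ m ω))
          ≤ ∑ m, (‖a ℓ m ω‖₊ : ℝ≥0∞) ^ 2 :=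
        (traceNorm_sum_le _ _).trans (Finset.sum_le_sum fun m _ => traceNorm_rankOne_le _)
      calc traceNorm (sampPS (a ℓ) ω)
          ≤ (‖((n : ℝ))⁻¹‖₊ : ℝ≥0∞) * traceNorm (∑ m, rankOne (a ℓ m ω) (a ℓ m ω)) := h2
        _ = ((n : ℝ≥0∞))⁻¹ * traceNorm (∑ m, rankOne (a ℓ m ω) (a ℓ m ω)) := by rw [h4]
        _ ≤ ((n : ℝ≥0∞))⁻¹ * ∑ m, (‖a ℓ m ω‖₊ : ℝ≥0∞) ^ 2 := mul_le_mul_right h3 _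
    have hbound : ∀ ω, traceNorm (sampPS (a ℓ) ω - F ℓ)
        ≤ ((n : ℝ≥0∞))⁻¹ * ∑ m, (‖a ℓ m ω‖₊ : ℝ≥0∞) ^ 2 + traceNorm (F ℓ) :=
      fun ω => (traceNorm_sub_le _ _).trans (add_le_add_left (hS ω) _)
    calc ∫⁻ ω, traceNorm (sampPS (a ℓ) ω - F ℓ) ∂P
        ≤ ∫⁻ ω, (((n : ℝ≥0∞))⁻¹ * ∑ m, (‖a ℓ m ω‖₊ : ℝ≥0∞) ^ 2 + traceNorm (F ℓ)) ∂P :=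
          lintegral_mono hbound
      _ = ((n : ℝ≥0∞))⁻¹ * ∑ m, ∫⁻ ω, (‖a ℓ m ω‖₊ : ℝ≥0∞) ^ 2 ∂P + traceNorm (F ℓ) := by
          rw [lintegral_add_right _ measurable_const, lintegral_const, measure_univ, mul_one,
            lintegral_const_mul' _ _ (ENNReal.inv_ne_top.2 hn0),
            lintegral_finsetSum' (f := fun m ω => (‖a ℓ m ω‖₊ : ℝ≥0∞) ^ 2) _
              fun m _ => (hmeas ℓ m).enorm.pow_const 2]
      _ ≤ ((n : ℝ≥0∞))⁻¹ * ∑ _m : Fin n, traceNorm (F ℓ) + traceNorm (F ℓ) := by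
          refine add_le_add_left (mul_le_mul_right (Finset.sum_le_sum fun m _ => ?_) _) _
          exact lintegral_norm_sq_le (hmeas ℓ m) (hL2 ℓ m) (hcov ℓ m)
      _ = traceNorm (F ℓ) + traceNorm (F ℓ) := by
          rw [Finset.sum_const, Finset.card_univ, Fintype.card_fin, nsmul_eq_mul,
            ← mul_assoc, ENNReal.inv_mul_cancel hn0 hnt, one_mul]
      _ = 2 * traceNorm (F ℓ) := (two_mul _).symm
  have h2 : ∀ ε : ℝ, 0 < ε → ∀ ℓ,
      P {ω | ENNReal.ofReal ε < traceNorm (sampPS (a ℓ) ω - F ℓ)}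
        ≤ ENNReal.ofReal (2 / ε) * traceNorm (F ℓ) := by
    intro ε hε ℓ
    have hε0 : ENNReal.ofReal ε ≠ 0 := (ENNReal.ofReal_pos.2 hε).ne'
    have hεt : ENNReal.ofReal ε ≠ ⊤ := ENNReal.ofReal_ne_top
    have hmar := mul_meas_ge_le_lintegral₀ (hgmeas ℓ) (ENNReal.ofReal ε)
    have hsub : P {ω | ENNReal.ofReal ε < traceNorm (sampPS (a ℓ) ω - F ℓ)}
        ≤ P {ω | ENNReal.ofReal ε ≤ traceNorm (sampPS (a ℓ) ω - F ℓ)} :=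
      measure_mono fun ω h => by
        simp only [Set.mem_setOf_eq] at h ⊢
        exact h.le
    have hkey : ENNReal.ofReal ε * P {ω | ENNReal.ofReal ε < traceNorm (sampPS (a ℓ) ω - F ℓ)}
        ≤ 2 * traceNorm (F ℓ) :=
      le_trans (mul_le_mul_right hsub _) (hmar.trans (h1 ℓ))
    have hP : P {ω | ENNReal.ofReal ε < traceNorm (sampPS (a ℓ) ω - F ℓ)}
        ≤ (ENNReal.ofReal ε)⁻¹ * (2 * traceNorm (F ℓ)) := by
      have := mul_le_mul_right hkey (ENNReal.ofReal ε)⁻¹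
      rwa [← mul_assoc, ENNReal.inv_mul_cancel hε0 hεt, one_mul] at this
    refine hP.trans (le_of_eq ?_)
    rw [ENNReal.ofReal_div_of_pos hε, ENNReal.ofReal_ofNat, ENNReal.div_eq_inv_mul, mul_assoc]
  have h2' : ∀ ε : ℝ, 0 < ε →
      ∑' ℓ, P {ω | ENNReal.ofReal ε < traceNorm (sampPS (a ℓ) ω - F ℓ)}
          ≤ ENNReal.ofReal (2 / ε) * ∑' ℓ, traceNorm (F ℓ) ∧
        ∑' ℓ, P {ω | ENNReal.ofReal ε < traceNorm (sampPS (a ℓ) ω - F ℓ)} < ⊤ := by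
    intro ε hε
    have hle := ENNReal.tsum_le_tsum (h2 ε hε)
    rw [ENNReal.tsum_mul_left] at hle
    refine ⟨hle, lt_of_le_of_lt hle (ENNReal.mul_lt_top ?_ ?_)⟩
    · exact ENNReal.ofReal_lt_top
    · exact lt_top_iff_ne_top.2 hsum
  refine ⟨h1, h2', ?_⟩
  have hk : ∀ k : ℕ, ∀ᵐ ω ∂P, ∀ᶠ ℓ in atTop,
      traceNorm (sampPS (a ℓ) ω - F ℓ) ≤ ENNReal.ofReal (1 / (k + 1 : ℝ)) := by
    intro k
    have hpos : (0 : ℝ) < 1 / (k + 1) := by positivity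
    have hfin := (h2' (1 / (k + 1)) hpos).2
    have hbc := ae_eventually_notMem hfin.ne
    filter_upwards [hbc] with ω hω
    refine hω.mono fun ℓ hℓ => ?_
    simpa [Set.mem_setOf_eq, not_lt] using hℓ
  have hall : ∀ᵐ ω ∂P, ∀ k : ℕ, ∀ᶠ ℓ in atTop,
      traceNorm (sampPS (a ℓ) ω - F ℓ) ≤ ENNReal.ofReal (1 / (k + 1 : ℝ)) :=
    ae_all_iff.2 hk
  filter_upwards [hall] with ω hω
  rw [ENNReal.tendsto_nhds_zero]
  intro ε hε
  obtain ⟨k, hk'⟩ := ENNReal.exists_inv_nat_lt hε.ne'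
  refine (hω k).mono fun ℓ hℓ => hℓ.trans ?_
  have e1 : ENNReal.ofReal (1 / (k + 1 : ℝ)) = (((k : ℝ≥0∞)) + 1)⁻¹ := by
    rw [one_div, ENNReal.ofReal_inv_of_pos (by positivity)]
    congr 1
    rw [ENNReal.ofReal_add (by positivity) zero_le_one, ENNReal.ofReal_natCast,
      ENNReal.ofReal_one]
  rw [e1]
  exact le_trans (ENNReal.inv_le_inv.2 le_self_add) hk'.le

end RF
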